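/- Let w : ℤ → ℝ → ℝ be a family of differentiable functions satisfying for all n ∈ ℤ and t ∈ ℝ the equation ẇ_n = (w_{n+1} + w_n)(w_n + w_{n−1})(w_{n+2} + w_{n+1} − w_{n−1} − w_{n−2}). Define u_n(t) = (w_{n+2}(t) + w_{n+1}(t))(w_{n+1}(t) + w_n(t)). Then for all n ∈ ℤ and t ∈ ℝ, u̇_n = u_n (u_{n+2} + u_{n+1} − u_{n−1} − u_{n−2}), i.e., u solves the INB equation. -/

import Mathlib

/-- Equation `ẇₙ = (w_{n+1}+wₙ)(wₙ+w_{n−1})(w_{n+2}+w_{n+1}−w_{n−1}−w_{n−2})` is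
transformed into the INB equation by `uₙ = (w_{n+2}+w_{n+1})(w_{n+1}+wₙ)`. -/
theorem stmt_6 (w : ℤ → ℝ → ℝ)
    (hw : ∀ (n : ℤ) (t : ℝ), HasDerivAt (w n)
      ((w (n + 1) t + w n t) * (w n t + w (n - 1) t)
        * (w (n + 2) t + w (n + 1) t - w (n - 1) t - w (n - 2) t)) t)
    (u : ℤ → ℝ → ℝ)
    (hu : ∀ (n : ℤ) (t : ℝ), u n t = (w (n + 2) t + w (n + 1) t) * (w (n + 1) t + w n t)) :
    ∀ (n : ℤ) (t : ℝ), HasDerivAt (u n)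
      (u n t * (u (n + 2) t + u (n + 1) t - u (n - 1) t - u (n - 2) t)) t := by
  intro n t
  have hfun : u n = fun s => (w (n + 2) s + w (n + 1) s) * (w (n + 1) s + w n s) :=
    funext (hu n)
  rw [hfun]
  have D : HasDerivAt (fun s => (w (n + 2) s + w (n + 1) s) * (w (n + 1) s + w n s)) _ t :=
    (((hw (n + 2) t).add (hw (n + 1) t)).mul ((hw (n + 1) t).add (hw n t)))
  convert D using 1
  simp only [hu, Pi.add_apply, show n + 2 + 2 = n + 4 by ring, show n + 2 + 1 = n + 3 by ring,
    show n + 2 - 1 = n + 1 by ring, show n + 2 - 2 = n by ring,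
    show n + 1 + 2 = n + 3 by ring, show n + 1 + 1 = n + 2 by ring,
    show n + 1 - 1 = n by ring, show n + 1 - 2 = n - 1 by ring,
    show n - 1 + 2 = n + 1 by ring, show n - 1 + 1 = n by ring,
    show n - 2 + 2 = n by ring, show n - 2 + 1 = n - 1 by ring]
  ring
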